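/- For ξ ∈ (0,1] and x ∈ (0,1), with W = Ã⁻¹(x,1,1)·v(x,1,1,ξ) where v(s₀,s₁,s₂,ξ) = (−(1+ξ)/(s₀√(2(ξ²+ξ+1))), ξ/(s₁√(2(ξ²+ξ+1))), 1/(s₂√(2(ξ²+ξ+1)))), one has ⟨v, W⟩ = (x²(ξ−1)² − 4x(ξ−1)² − 12(ξ+1)²)/(24x(x−4)(ξ²+ξ+1)). -/

import Mathlib

set_option maxHeartbeats 1000000 in
/-- For ξ ∈ (0,1] and x ∈ (0,1), with Ã = Ã(x,1,1) and
v = (−(1+ξ)/(x√(2(ξ²+ξ+1))), ξ/√(2(ξ²+ξ+1)), 1/√(2(ξ²+ξ+1))), one has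
⟨v, Ã⁻¹v⟩ = (x²(ξ−1)² − 4x(ξ−1)² − 12(ξ+1)²)/(24x(x−4)(ξ²+ξ+1)). -/
theorem stmt12 (ξ x : ℝ) (hξ : ξ ∈ Set.Ioc (0:ℝ) 1) (hx : x ∈ Set.Ioo (0:ℝ) 1) :
    dotProduct
        ![-(1 + ξ) / (x * Real.sqrt (2 * (ξ ^ 2 + ξ + 1))),
          ξ / (1 * Real.sqrt (2 * (ξ ^ 2 + ξ + 1))),
          1 / (1 * Real.sqrt (2 * (ξ ^ 2 + ξ + 1)))]
        ((!![4 / x, x - 3, x - 3;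
             x - 3, 4, -2;
             x - 3, -2, 4] : Matrix (Fin 3) (Fin 3) ℝ)⁻¹.mulVec
          ![-(1 + ξ) / (x * Real.sqrt (2 * (ξ ^ 2 + ξ + 1))),
            ξ / (1 * Real.sqrt (2 * (ξ ^ 2 + ξ + 1))),
            1 / (1 * Real.sqrt (2 * (ξ ^ 2 + ξ + 1)))])
      = (x ^ 2 * (ξ - 1) ^ 2 - 4 * x * (ξ - 1) ^ 2 - 12 * (ξ + 1) ^ 2) /
          (24 * x * (x - 4) * (ξ ^ 2 + ξ + 1)) := by
  obtain ⟨hξ0, hξ1⟩ := hξ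
  obtain ⟨hx0, hx1⟩ := hx
  set s := Real.sqrt (2 * (ξ ^ 2 + ξ + 1)) with hsdef
  have hq : (0:ℝ) < 2 * (ξ ^ 2 + ξ + 1) := by positivity
  have hs2 : s ^ 2 = 2 * (ξ ^ 2 + ξ + 1) := Real.sq_sqrt hq.le
  have hs0 : s ≠ 0 := ne_of_gt (Real.sqrt_pos.mpr hq)
  have hxne : x ≠ 0 := ne_of_gt hx0
  have hx4 : x - 4 ≠ 0 := by nlinarith
  have hx1' : x - 1 ≠ 0 := by nlinarith
  have hD : (-12 : ℝ) * (x - 1) ^ 2 * (x - 4) ≠ 0 := by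
    intro h
    rcases mul_eq_zero.mp h with h | h
    · rcases mul_eq_zero.mp h with h | h
      · norm_num at h
      · exact hx1' (pow_eq_zero_iff (by norm_num) |>.mp h)
    · exact hx4 h
  have hinv : (!![4 / x, x - 3, x - 3;
             x - 3, 4, -2;
             x - 3, -2, 4] : Matrix (Fin 3) (Fin 3) ℝ)⁻¹
      = !![12 * x / (-12 * (x - 1) ^ 2 * (x - 4)),
           -6 * x * (x - 3) / (-12 * (x - 1) ^ 2 * (x - 4)),
           -6 * x * (x - 3) / (-12 * (x - 1) ^ 2 * (x - 4));
           -6 * x * (x - 3) / (-12 * (x - 1) ^ 2 * (x - 4)),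
           (16 - x * (x - 3) ^ 2) / (-12 * (x - 1) ^ 2 * (x - 4)),
           (8 + x * (x - 3) ^ 2) / (-12 * (x - 1) ^ 2 * (x - 4));
           -6 * x * (x - 3) / (-12 * (x - 1) ^ 2 * (x - 4)),
           (8 + x * (x - 3) ^ 2) / (-12 * (x - 1) ^ 2 * (x - 4)),
           (16 - x * (x - 3) ^ 2) / (-12 * (x - 1) ^ 2 * (x - 4))] := by
    apply Matrix.inv_eq_right_inv
    rw [Matrix.mul_fin_three, Matrix.one_fin_three]
    ext i j
    fin_cases i <;> fin_cases j <;>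
      · simp only [Fin.zero_eta, Fin.mk_one, Fin.reduceFinMk, Matrix.cons_val_zero, Matrix.cons_val_one, Matrix.head_cons,
          Matrix.cons_val_two, Matrix.tail_cons, Matrix.of_apply,
           Matrix.cons_val_fin_one,
          Matrix.head_fin_const]
        field_simp
        ring
  rw [hinv]
  have hv : ![-(1 + ξ) / (x * s), ξ / (1 * s), 1 / (1 * s)]
      = s⁻¹ • ![-(1 + ξ) / x, ξ, 1] := by
    funext i
    fin_cases i <;> simp [div_eq_mul_inv] <;> ring
  rw [hv, Matrix.mulVec_smul, dotProduct_smul, smul_dotProduct]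
  simp only [smul_eq_mul]
  rw [← mul_assoc, ← mul_inv, ← sq, hs2]
  rw [show ((2:ℝ) * (ξ ^ 2 + ξ + 1))⁻¹ * _ = _ from rfl]
  simp only [Matrix.cons_mulVec, Matrix.empty_mulVec, Matrix.vec3_dotProduct,
    Matrix.cons_val_zero, Matrix.cons_val_one, Matrix.head_cons,
    Matrix.cons_val_two, Matrix.tail_cons,
    Matrix.of_apply]
  have hq0 : (ξ:ℝ) ^ 2 + ξ + 1 ≠ 0 := by positivity
  field_simp
  ring
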